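/- There exists an M-set (a set with an action of the monoid M of injective self-maps of ω) and an element f ∈ M such that the action of f is not an injective map; concretely, on the set {0,1} with f acting as the identity if ω \ f(ω) is finite and as the constant map to 0 if ω \ f(ω) is infinite, the action is a valid M-action that is not injective for any f with infinite complementary image. -/

import Mathlib

/-- The injection monoid `M`: injective self-maps of `ℕ` under composition. -/
def M : Submonoid (Function.End ℕ) where
  carrier := {f | Function.Injective f}
  mul_mem' := fun hf hg => hf.comp hg
  one_mem' := fun _ _ h => h

/-- An element `x` of an `M`-set is supported on `A ⊆ ℕ` if every `f ∈ M`
fixing `A` elementwise satisfies `f • x = x`. -/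
def SuppOn {W : Type*} [MulAction M W] (x : W) (A : Set ℕ) : Prop :=
  ∀ f : M, (∀ a ∈ A, f.1 a = a) → f • x = x

/-- An element is finitely supported if it is supported on some finite set. -/
def FinSupp {W : Type*} [MulAction M W] (x : W) : Prop :=
  ∃ A : Finset ℕ, SuppOn x ↑A

open Classical in
/-- The support: intersection of all finite supporting sets, or `Set.univ`
if the element is not finitely supported. -/
noncomputable def supp {W : Type*} [MulAction M W] (x : W) : Set ℕ :=
  if FinSupp x then ⋂₀ {A : Set ℕ | A.Finite ∧ SuppOn x A} else Set.univ

/-- The action of `f ∈ M` on `Bool` ("the set {0,1}", with `false` playing the role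
of `0`): the identity if the complement of the image of `f` is finite, and the
constant map to `0` otherwise. -/
noncomputable def badAct (f : M) (b : Bool) : Bool :=
  open Classical in if (Set.range f.1)ᶜ.Finite then b else false

lemma range_mul (f g : M) : Set.range (f * g).1 = f.1 '' Set.range g.1 := by
  ext x; constructor
  · rintro ⟨y, rfl⟩; exact ⟨g.1 y, ⟨y, rfl⟩, rfl⟩
  · rintro ⟨_, ⟨y, rfl⟩, rfl⟩; exact ⟨y, rfl⟩

lemma cof_mul (f g : M) :
    (Set.range (f * g).1)ᶜ.Finite ↔ (Set.range f.1)ᶜ.Finite ∧ (Set.range g.1)ᶜ.Finite := by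
  constructor
  · intro h
    constructor
    · exact h.subset (Set.compl_subset_compl.2 (by rw [range_mul]; exact Set.image_subset_range _ _))
    · have hsub : f.1 '' (Set.range g.1)ᶜ ⊆ (Set.range (f * g).1)ᶜ := by
        rintro _ ⟨x, hx, rfl⟩
        rw [range_mul]
        rintro ⟨y, hy, he⟩
        exact hx ((f.2 he) ▸ hy)
      have : (f.1 '' (Set.range g.1)ᶜ).Finite := h.subset hsub
      exact (Set.Finite.of_finite_image this (f.2.injOn))
  · rintro ⟨hf, hg⟩
    have : (Set.range (f * g).1)ᶜ ⊆ (Set.range f.1)ᶜ ∪ f.1 '' (Set.range g.1)ᶜ := by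
      intro x hx
      rw [range_mul] at hx
      by_cases hxf : x ∈ Set.range f.1
      · obtain ⟨y, rfl⟩ := hxf
        right
        refine ⟨y, fun hy => ?_, rfl⟩
        obtain ⟨z, hz⟩ := hy
        exact hx ⟨g.1 z, Set.mem_range_self z, by rw [hz]⟩
      · exact Or.inl hxf
    exact (hf.union (hg.image _)).subset this

/-- `badAct` is a genuine (non-tame) `M`-action on a two-element set for which the
action of every `f` with infinite complementary image fails to be injective. -/
theorem exists_nontame_M_set_with_noninjective_action :
    (∀ b, badAct 1 b = b) ∧
    (∀ f g : M, ∀ b, badAct (f * g) b = badAct f (badAct g b)) ∧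
    (∀ f : M, (Set.range f.1)ᶜ.Finite → badAct f = id) ∧
    (∀ f : M, (Set.range f.1)ᶜ.Infinite → badAct f = fun _ => false) ∧
    (∀ f : M, (Set.range f.1)ᶜ.Infinite → ¬ Function.Injective (badAct f)) := by
  refine ⟨?_, ?_, ?_, ?_, ?_⟩
  · intro b
    have h2 : (Set.range ((1:M).1))ᶜ = ∅ := by
      ext x
      simp only [Set.mem_compl_iff, Set.mem_empty_iff_false, iff_false, not_not]
      exact ⟨x, rfl⟩
    rw [badAct, if_pos (h2 ▸ Set.finite_empty)]
  · intro f g b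
    classical
    rw [badAct, badAct, badAct, if_congr (cof_mul f g) rfl rfl]
    by_cases hf : (Set.range f.1)ᶜ.Finite <;> by_cases hg : (Set.range g.1)ᶜ.Finite <;>
      simp [hf, hg]
  · intro f hf; funext b; simp [badAct, hf]
  · intro f hf; funext b; rw [badAct, if_neg hf]
  · intro f hf hinj
    have h1 : badAct f true = false := by rw [badAct, if_neg hf]
    have h2 : badAct f false = false := by rw [badAct, if_neg hf]
    have : (true : Bool) = false := hinj (h1.trans h2.symm)
    simp at this
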